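/- Let A be an associative unital algebra over a field K, generated by elements a, a*, g (g playing the role of q^N) subject to a·g = q·g·a, g·a* = q·a*·g, and a·a* − Q1·a*·a = Q2·g^2, with q, Q1, Q2 scalars and q, Q1 nonzero. Then for all n ∈ ℕ, a·(a*)^n = Q1^n (a*)^n a + Q2 ((Q1^n − q^{2n})/(Q1 − q^2)) (a*)^{n−1} g^2, provided Q1 ≠ q^2. -/
import Mathlib


theorem stmt_8 {K : Type*} [Field K] {A : Type*} [Ring A] [Algebra K A]
    (a astar g : A) (q Q1 Q2 : K) (hq : q ≠ 0) (hQ1 : Q1 ≠ 0) (hne : Q1 ≠ q ^ 2)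
    (h1 : a * g = q • (g * a))
    (h2 : g * astar = q • (astar * g))
    (h3 : a * astar - Q1 • (astar * a) = Q2 • g ^ 2) :
    ∀ n : ℕ, a * astar ^ n =
      Q1 ^ n • (astar ^ n * a) +
      (Q2 * ((Q1 ^ n - q ^ (2 * n)) / (Q1 - q ^ 2))) • (astar ^ (n - 1) * g ^ 2) := by
  have hd : Q1 - q ^ 2 ≠ 0 := sub_ne_zero.mpr hne
  have h3' : a * astar = Q1 • (astar * a) + Q2 • g ^ 2 := by
    linear_combination (norm := module) h3
  have hg2 : g ^ 2 * astar = (q ^ 2) • (astar * g ^ 2) := by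
    calc g ^ 2 * astar = g * (g * astar) := by rw [sq, mul_assoc]
    _ = g * (q • (astar * g)) := by rw [h2]
    _ = q • (g * astar * g) := by rw [mul_smul_comm, mul_assoc]
    _ = q • ((q • (astar * g)) * g) := by rw [h2]
    _ = (q ^ 2) • (astar * g ^ 2) := by
        rw [smul_mul_assoc, smul_smul, sq, sq, mul_assoc]
  have key : ∀ n : ℕ, a * astar ^ (n + 1) =
      Q1 ^ (n + 1) • (astar ^ (n + 1) * a) +
      (Q2 * ((Q1 ^ (n + 1) - q ^ (2 * (n + 1))) / (Q1 - q ^ 2))) • (astar ^ n * g ^ 2) := by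
    intro n
    induction n with
    | zero =>
      simp only [zero_add, pow_one, pow_zero, one_mul, mul_one]
      rw [h3']
      congr 2
      field_simp
    | succ n ih =>
      have step : a * astar ^ (n + 2) = (a * astar ^ (n + 1)) * astar := by
        rw [mul_assoc, ← pow_succ]
      rw [step, ih, add_mul, smul_mul_assoc, smul_mul_assoc,
        mul_assoc, mul_assoc, h3', hg2]
      rw [mul_add, smul_add, mul_smul_comm, mul_smul_comm, mul_smul_comm, smul_smul, smul_smul,
        smul_smul]
      have e1 : astar ^ (n + 1) * (astar * a) = astar ^ (n + 2) * a := by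
        rw [← mul_assoc, ← pow_succ]
      have e2 : astar ^ n * (astar * g ^ 2) = astar ^ (n + 1) * g ^ 2 := by
        rw [← mul_assoc, ← pow_succ]
      rw [e1, e2, add_assoc]
      congr 1
      · congr 1; ring
      · rw [← add_smul]
        congr 1
        field_simp
        ring
  intro n
  match n with
  | 0 =>
    simp
  | Nat.succ m =>
    simpa using key m
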